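/- Let (f_ε)_{ε∈(0,1]} be a net of Schwartz functions on ℝ^d such that (a) for every (q,l) ∈ ℕ² there exists a ∈ ℕ with μ_{q,l}(f_ε) = O(ε^{-a}) as ε→0, and (b) for every q ∈ ℕ and every m ∈ ℕ, μ_{q,0}(f_ε) = O(ε^m) as ε→0. Then for every (q,l) ∈ ℕ² and every m ∈ ℕ, μ_{q,l}(f_ε) = O(ε^m) as ε→0. -/

import Mathlib

open Set

section aux

variable {E : Type*} [NormedAddCommGroup E] [NormedSpace ℝ E]

/-- Derivative of an iterated derivative along a line. -/
lemma stmt4_lineDeriv (g : E → ℂ) (hg : ContDiff ℝ (⊤ : ℕ∞) g) (n : ℕ) (x u : E)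
    (w : Fin n → E) (t : ℝ) :
    HasDerivAt (fun s : ℝ => iteratedFDeriv ℝ n g (x + s • u) w)
      (iteratedFDeriv ℝ (n + 1) g (x + t • u) (Fin.cons u w)) t := by
  have hF : ContDiff ℝ (⊤ : ℕ∞) (iteratedFDeriv ℝ n g) :=
    hg.iteratedFDeriv_right (by exact_mod_cast le_top)
  have hd : DifferentiableAt ℝ (iteratedFDeriv ℝ n g) (x + t • u) :=
    (hF.differentiable (by simp)) _
  have hline : HasDerivAt (fun s : ℝ => x + s • u) u t := by
    simpa using ((hasDerivAt_id t).smul_const u).const_add x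
  have h3 : HasDerivAt (fun s : ℝ => iteratedFDeriv ℝ n g (x + s • u))
      (fderiv ℝ (iteratedFDeriv ℝ n g) (x + t • u) u) t :=
    hd.hasFDerivAt.comp_hasDerivAt t hline
  have h4 := ((ContinuousMultilinearMap.apply ℝ (fun _ : Fin n => E)
      ℂ w).hasFDerivAt).comp_hasDerivAt t h3
  have hrw : iteratedFDeriv ℝ (n + 1) g (x + t • u) (Fin.cons u w) =
      fderiv ℝ (iteratedFDeriv ℝ n g) (x + t • u) u w := by
    rw [iteratedFDeriv_succ_apply_left]
    simp
  rw [hrw]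
  exact h4

/-- A Taylor-type estimate for a twice differentiable function on `[0, h]`. -/
lemma stmt4_taylor (φ φ' φ'' : ℝ → ℂ) (h B : ℝ) (hh : 0 < h)
    (hφ : ∀ t ∈ Icc (0:ℝ) h, HasDerivAt φ (φ' t) t)
    (hφ' : ∀ t ∈ Icc (0:ℝ) h, HasDerivAt φ' (φ'' t) t)
    (hB : ∀ t ∈ Icc (0:ℝ) h, ‖φ'' t‖ ≤ B) :
    ‖φ' 0‖ * h ≤ ‖φ h‖ + ‖φ 0‖ + B * h ^ 2 := by
  have h0mem : (0:ℝ) ∈ Icc (0:ℝ) h := ⟨le_rfl, hh.le⟩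
  have hhmem : h ∈ Icc (0:ℝ) h := ⟨hh.le, le_rfl⟩
  have hB0 : 0 ≤ B := le_trans (norm_nonneg _) (hB 0 h0mem)
  -- first order bound on the variation of φ'
  have key1 : ∀ t ∈ Icc (0:ℝ) h, ‖φ' t - φ' 0‖ ≤ B * h := by
    intro t ht
    have := (convex_Icc (0:ℝ) h).norm_image_sub_le_of_norm_hasDerivWithin_le
      (fun s hs => (hφ' s hs).hasDerivWithinAt) hB h0mem ht
    have ht' : ‖t - 0‖ ≤ h := by
      rw [sub_zero, Real.norm_eq_abs, abs_of_nonneg ht.1]; exact ht.2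
    calc ‖φ' t - φ' 0‖ ≤ B * ‖t - 0‖ := this
      _ ≤ B * h := by nlinarith [norm_nonneg (t - 0)]
  -- bound on ψ = φ - t • φ' 0
  set ψ : ℝ → ℂ := fun t => φ t - t • φ' 0 with hψdef
  have hψ : ∀ t ∈ Icc (0:ℝ) h, HasDerivWithinAt ψ (φ' t - φ' 0) (Icc (0:ℝ) h) t := by
    intro t ht
    have h1 : HasDerivAt (fun t : ℝ => t • φ' 0) (φ' 0) t := by
      simpa using (hasDerivAt_id t).smul_const (φ' 0)
    exact ((hφ t ht).sub h1).hasDerivWithinAt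
  have hh0' : ‖h - 0‖ = h := by rw [sub_zero, Real.norm_eq_abs, abs_of_nonneg hh.le]
  have key2 : ‖ψ h - ψ 0‖ ≤ B * h * h := by
    have := (convex_Icc (0:ℝ) h).norm_image_sub_le_of_norm_hasDerivWithin_le hψ key1 h0mem hhmem
    rwa [hh0'] at this
  have hψh : ψ h - ψ 0 = φ h - φ 0 - h • φ' 0 := by
    simp [hψdef]; ring
  have hnorm : ‖h • φ' 0‖ = ‖φ' 0‖ * h := by
    rw [norm_smul, Real.norm_eq_abs, abs_of_nonneg hh.le]; ring
  have tri : ‖h • φ' 0‖ ≤ ‖φ h‖ + ‖φ 0‖ + ‖ψ h - ψ 0‖ := by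
    have : h • φ' 0 = (φ h - φ 0) - (ψ h - ψ 0) := by rw [hψh]; ring
    rw [this]
    calc ‖(φ h - φ 0) - (ψ h - ψ 0)‖ ≤ ‖φ h - φ 0‖ + ‖ψ h - ψ 0‖ := norm_sub_le _ _
      _ ≤ (‖φ h‖ + ‖φ 0‖) + ‖ψ h - ψ 0‖ := by gcongr; exact norm_sub_le _ _
  rw [← hnorm]
  calc ‖h • φ' 0‖ ≤ ‖φ h‖ + ‖φ 0‖ + ‖ψ h - ψ 0‖ := tri
    _ ≤ ‖φ h‖ + ‖φ 0‖ + B * h * h := by gcongr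
    _ = ‖φ h‖ + ‖φ 0‖ + B * h ^ 2 := by ring

/-- The Landau–Kolmogorov one-step interpolation estimate with polynomial weights. -/
lemma stmt4_step (g : E → ℂ) (hg : ContDiff ℝ (⊤ : ℕ∞) g) (q n : ℕ) (h K0 K2 : ℝ)
    (hh0 : 0 < h) (hh1 : h ≤ 1)
    (hK0 : ∀ y : E, (1 + ‖y‖) ^ q * ‖iteratedFDeriv ℝ n g y‖ ≤ K0)
    (hK2 : ∀ y : E, (1 + ‖y‖) ^ q * ‖iteratedFDeriv ℝ (n + 2) g y‖ ≤ K2) (x : E) :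
    (1 + ‖x‖) ^ q * ‖iteratedFDeriv ℝ (n + 1) g x‖ ≤ 2 ^ q * (2 * K0 / h + K2 * h) := by
  have hx1 : (0:ℝ) < 1 + ‖x‖ := by positivity
  have hD : (0:ℝ) < (1 + ‖x‖) ^ q := by positivity
  have hK0' : 0 ≤ K0 := le_trans (by positivity) (hK0 x)
  have hK2' : 0 ≤ K2 := le_trans (by positivity) (hK2 x)
  set D : ℝ := (1 + ‖x‖) ^ q with hDdef
  set M : ℝ := 2 ^ q * (2 * K0 / h + K2 * h) / D with hMdef
  have hM0 : 0 ≤ M := by positivity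
  have hnorm : ‖iteratedFDeriv ℝ (n + 1) g x‖ ≤ M := by
    apply ContinuousMultilinearMap.opNorm_le_bound hM0
    intro v
    by_cases hv0 : v 0 = 0
    · rw [ContinuousMultilinearMap.map_coord_zero _ 0 hv0]
      simp only [norm_zero]
      positivity
    · set c : ℝ := ‖v 0‖ with hcdef
      have hc : 0 < c := norm_pos_iff.mpr hv0
      set u : E := c⁻¹ • v 0 with hudef
      have hu : ‖u‖ = 1 := by
        rw [hudef, norm_smul, norm_inv, norm_norm, ← hcdef, inv_mul_cancel₀ hc.ne']
      set w : Fin n → E := Fin.tail v with hwdef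
      set P : ℝ := ∏ i, ‖w i‖ with hPdef
      have hP : 0 ≤ P := by positivity
      -- weight comparison along the segment
      have hweight : ∀ t ∈ Icc (0:ℝ) h, D ≤ 2 ^ q * (1 + ‖x + t • u‖) ^ q := by
        intro t ht
        have h1 : 1 + ‖x‖ ≤ 2 * (1 + ‖x + t • u‖) := by
          have h2 : ‖x‖ ≤ ‖x + t • u‖ + ‖t • u‖ := by
            calc ‖x‖ = ‖(x + t • u) - t • u‖ := by rw [add_sub_cancel_right]
              _ ≤ ‖x + t • u‖ + ‖t • u‖ := norm_sub_le _ _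
          have h3 : ‖t • u‖ ≤ 1 := by
            rw [norm_smul, hu, mul_one, Real.norm_eq_abs, abs_of_nonneg ht.1]
            exact le_trans ht.2 hh1
          nlinarith [norm_nonneg (x + t • u)]
        calc D = (1 + ‖x‖) ^ q := rfl
          _ ≤ (2 * (1 + ‖x + t • u‖)) ^ q := by
              apply pow_le_pow_left₀ (by positivity) h1
          _ = 2 ^ q * (1 + ‖x + t • u‖) ^ q := mul_pow 2 _ q
      -- the scalar functions
      set φ : ℝ → ℂ := fun t => iteratedFDeriv ℝ n g (x + t • u) w with hφdef
      set φ' : ℝ → ℂ := fun t => iteratedFDeriv ℝ (n + 1) g (x + t • u) (Fin.cons u w)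
        with hφ'def
      set φ'' : ℝ → ℂ := fun t =>
        iteratedFDeriv ℝ (n + 2) g (x + t • u) (Fin.cons u (Fin.cons u w)) with hφ''def
      have hd1 : ∀ t ∈ Icc (0:ℝ) h, HasDerivAt φ (φ' t) t := fun t _ =>
        stmt4_lineDeriv g hg n x u w t
      have hd2 : ∀ t ∈ Icc (0:ℝ) h, HasDerivAt φ' (φ'' t) t := fun t _ =>
        stmt4_lineDeriv g hg (n + 1) x u (Fin.cons u w) t
      -- pointwise bounds
      have hb0 : ∀ t ∈ Icc (0:ℝ) h, ‖φ t‖ ≤ 2 ^ q * K0 * P / D := by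
        intro t ht
        rw [le_div_iff₀ hD, mul_comm _ D]
        calc D * ‖φ t‖ ≤ D * (‖iteratedFDeriv ℝ n g (x + t • u)‖ * P) := by
              gcongr
              exact ContinuousMultilinearMap.le_opNorm _ _
          _ ≤ (2 ^ q * (1 + ‖x + t • u‖) ^ q) * (‖iteratedFDeriv ℝ n g (x + t • u)‖ * P) :=
              mul_le_mul_of_nonneg_right (hweight t ht) (by positivity)
          _ = 2 ^ q * ((1 + ‖x + t • u‖) ^ q * ‖iteratedFDeriv ℝ n g (x + t • u)‖) * P := by
              ring
          _ ≤ 2 ^ q * K0 * P := by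
              gcongr
              exact hK0 _
      have hb2 : ∀ t ∈ Icc (0:ℝ) h, ‖φ'' t‖ ≤ 2 ^ q * K2 * P / D := by
        intro t ht
        rw [le_div_iff₀ hD, mul_comm _ D]
        have hprod : (∏ i, ‖(Fin.cons u (Fin.cons u w) : Fin (n+2) → E) i‖) = P := by
          simp [Fin.prod_univ_succ, hu]
          rfl
        calc D * ‖φ'' t‖ ≤ D * (‖iteratedFDeriv ℝ (n + 2) g (x + t • u)‖ * P) := by
              gcongr
              calc ‖φ'' t‖ ≤ ‖iteratedFDeriv ℝ (n + 2) g (x + t • u)‖ *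
                    ∏ i, ‖(Fin.cons u (Fin.cons u w) : Fin (n+2) → E) i‖ :=
                  ContinuousMultilinearMap.le_opNorm _ _
                _ = ‖iteratedFDeriv ℝ (n + 2) g (x + t • u)‖ * P := by rw [hprod]
          _ ≤ (2 ^ q * (1 + ‖x + t • u‖) ^ q) *
                (‖iteratedFDeriv ℝ (n + 2) g (x + t • u)‖ * P) :=
              mul_le_mul_of_nonneg_right (hweight t ht) (by positivity)
          _ = 2 ^ q * ((1 + ‖x + t • u‖) ^ q *
                ‖iteratedFDeriv ℝ (n + 2) g (x + t • u)‖) * P := by ring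
          _ ≤ 2 ^ q * K2 * P := by
              gcongr
              exact hK2 _
      -- the Taylor estimate
      have htay := stmt4_taylor φ φ' φ'' h (2 ^ q * K2 * P / D) hh0 hd1 hd2 hb2
      have hmem0 : (0:ℝ) ∈ Icc (0:ℝ) h := ⟨le_rfl, hh0.le⟩
      have hmemh : h ∈ Icc (0:ℝ) h := ⟨hh0.le, le_rfl⟩
      have hφ'0 : ‖φ' 0‖ ≤ M * P := by
        have h1 : ‖φ' 0‖ * h ≤ 2 * (2 ^ q * K0 * P / D) + (2 ^ q * K2 * P / D) * h ^ 2 := by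
          calc ‖φ' 0‖ * h ≤ ‖φ h‖ + ‖φ 0‖ + (2 ^ q * K2 * P / D) * h ^ 2 := htay
            _ ≤ (2 ^ q * K0 * P / D) + (2 ^ q * K0 * P / D) + (2 ^ q * K2 * P / D) * h ^ 2 := by
                gcongr
                · exact hb0 h hmemh
                · exact hb0 0 hmem0
            _ = 2 * (2 ^ q * K0 * P / D) + (2 ^ q * K2 * P / D) * h ^ 2 := by ring
        have h2 : ‖φ' 0‖ ≤ (2 * (2 ^ q * K0 * P / D) + (2 ^ q * K2 * P / D) * h ^ 2) / h :=
          (le_div_iff₀ hh0).mpr h1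
        have h3 : (2 * (2 ^ q * K0 * P / D) + (2 ^ q * K2 * P / D) * h ^ 2) / h = M * P := by
          rw [hMdef]
          field_simp
        rw [← h3]
        exact h2
      -- conclude
      have hveq : v = Fin.cons (c • u) w := by
        have : c • u = v 0 := by
          rw [hudef, smul_smul, mul_inv_cancel₀ hc.ne', one_smul]
        rw [this, hwdef, Fin.cons_self_tail]
      have hAv : iteratedFDeriv ℝ (n + 1) g x v =
          c • iteratedFDeriv ℝ (n + 1) g x (Fin.cons u w) := by
        conv_lhs => rw [hveq]
        have h1 : (Fin.cons (c • u) w : Fin (n+1) → E) =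
            Function.update (Fin.cons u w) 0 (c • u) := by rw [Fin.update_cons_zero]
        have h2 : (Fin.cons u w : Fin (n+1) → E) =
            Function.update (Fin.cons u w) 0 u := by rw [Fin.update_cons_zero]
        rw [h1, ContinuousMultilinearMap.map_update_smul]
        rw [← h2]
      have hφ'0eq : φ' 0 = iteratedFDeriv ℝ (n + 1) g x (Fin.cons u w) := by
        simp [hφ'def]
      have hprodv : (∏ i, ‖v i‖) = c * P := by
        rw [Fin.prod_univ_succ, ← hcdef, hPdef]
        rfl
      rw [hAv, norm_smul, Real.norm_eq_abs, abs_of_nonneg hc.le, hprodv, ← hφ'0eq]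
      calc c * ‖φ' 0‖ ≤ c * (M * P) := mul_le_mul_of_nonneg_left hφ'0 hc.le
        _ = M * (c * P) := by ring
  calc (1 + ‖x‖) ^ q * ‖iteratedFDeriv ℝ (n + 1) g x‖ ≤ D * M := by
        rw [hDdef]; gcongr
    _ = 2 ^ q * (2 * K0 / h + K2 * h) := by
        rw [hMdef, mul_div_cancel₀ _ hD.ne']

end aux

/-- A moderate net of Schwartz functions whose 0-order seminorms `μ_{q,0}` are negligible
is negligible for all seminorms `μ_{q,l}`. -/
theorem stmt4 (d : ℕ) (f : ℝ → SchwartzMap (EuclideanSpace ℝ (Fin d)) ℂ)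
    (ha : ∀ q l : ℕ, ∃ a : ℕ, ∃ C > (0:ℝ), ∃ ε₀ ∈ Ioc (0:ℝ) 1, ∀ ε ∈ Ioo (0:ℝ) ε₀,
      ∀ x, ∀ n ≤ l, (1 + ‖x‖) ^ q * ‖iteratedFDeriv ℝ n (⇑(f ε)) x‖ ≤ C * ε ^ (-(a : ℝ)))
    (hb : ∀ q m : ℕ, ∃ C > (0:ℝ), ∃ ε₀ ∈ Ioc (0:ℝ) 1, ∀ ε ∈ Ioo (0:ℝ) ε₀,
      ∀ x, (1 + ‖x‖) ^ q * ‖f ε x‖ ≤ C * ε ^ (m : ℝ)) :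
    ∀ q l m : ℕ, ∃ C > (0:ℝ), ∃ ε₀ ∈ Ioc (0:ℝ) 1, ∀ ε ∈ Ioo (0:ℝ) ε₀,
      ∀ x, ∀ n ≤ l, (1 + ‖x‖) ^ q * ‖iteratedFDeriv ℝ n (⇑(f ε)) x‖ ≤ C * ε ^ (m : ℝ) := by
  intro q l
  induction l with
  | zero =>
    intro m
    obtain ⟨C, hC, ε₀, hε₀, H⟩ := hb q m
    refine ⟨C, hC, ε₀, hε₀, fun ε hε x n hn => ?_⟩
    interval_cases n
    rw [norm_iteratedFDeriv_zero]
    exact H ε hε x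
  | succ l IH =>
    intro m
    obtain ⟨a, C₂, hC₂, ε₂, hε₂, H₂⟩ := ha q (l + 2)
    obtain ⟨C₀, hC₀, ε₁, hε₁, H₁⟩ := IH (2 * m + a)
    refine ⟨2 ^ q * (2 * C₀ + C₂) + C₀, by positivity, min ε₁ ε₂,
      ⟨lt_min hε₁.1 hε₂.1, le_trans (min_le_left _ _) hε₁.2⟩, fun ε hε x n hn => ?_⟩
    have hεpos : 0 < ε := hε.1
    have hε1 : ε ≤ 1 := le_of_lt (lt_of_lt_of_le hε.2 (le_trans (min_le_left _ _) hε₁.2))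
    have hε₁' : ε ∈ Ioo (0:ℝ) ε₁ := ⟨hεpos, lt_of_lt_of_le hε.2 (min_le_left _ _)⟩
    have hε₂' : ε ∈ Ioo (0:ℝ) ε₂ := ⟨hεpos, lt_of_lt_of_le hε.2 (min_le_right _ _)⟩
    have hεm : (0:ℝ) < ε ^ (m:ℝ) := Real.rpow_pos_of_pos hεpos _
    rcases Nat.lt_succ_iff_lt_or_eq.mp (Nat.lt_succ_of_le hn) with hn' | hn'
    · -- n ≤ l : use the inductive bound with larger exponent
      have h1 := H₁ ε hε₁' x n (Nat.lt_succ_iff.mp hn')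
      have h2 : ε ^ ((2 * m + a : ℕ) : ℝ) ≤ ε ^ (m : ℝ) := by
        apply Real.rpow_le_rpow_of_exponent_ge hεpos hε1
        push_cast; linarith
      calc (1 + ‖x‖) ^ q * ‖iteratedFDeriv ℝ n (⇑(f ε)) x‖
          ≤ C₀ * ε ^ ((2 * m + a : ℕ) : ℝ) := h1
        _ ≤ C₀ * ε ^ (m : ℝ) := by gcongr
        _ ≤ (2 ^ q * (2 * C₀ + C₂) + C₀) * ε ^ (m : ℝ) := by
            have : (0:ℝ) ≤ 2 ^ q * (2 * C₀ + C₂) := by positivity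
            nlinarith
    · -- n = l + 1 : use the interpolation step
      subst hn'
      set h : ℝ := ε ^ ((m + a : ℕ) : ℝ) with hhdef
      have hh0 : 0 < h := Real.rpow_pos_of_pos hεpos _
      have hh1 : h ≤ 1 := Real.rpow_le_one hεpos.le hε1 (by positivity)
      have hstep := stmt4_step (⇑(f ε)) ((f ε).smooth ⊤) q l h
        (C₀ * ε ^ ((2 * m + a : ℕ) : ℝ)) (C₂ * ε ^ (-(a:ℝ))) hh0 hh1
        (fun y => H₁ ε hε₁' y l le_rfl)
        (fun y => H₂ ε hε₂' y (l + 2) le_rfl) x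
      have key : 2 ^ q * (2 * (C₀ * ε ^ ((2 * m + a : ℕ) : ℝ)) / h
          + (C₂ * ε ^ (-(a:ℝ))) * h) = 2 ^ q * (2 * C₀ + C₂) * ε ^ (m : ℝ) := by
        have e1 : ε ^ ((2 * m + a : ℕ) : ℝ) = ε ^ (m : ℝ) * h := by
          rw [hhdef, ← Real.rpow_add hεpos]
          congr 1
          push_cast; ring
        have e2 : ε ^ (-(a:ℝ)) * h = ε ^ (m : ℝ) := by
          rw [hhdef, ← Real.rpow_add hεpos]
          congr 1
          push_cast; ring
        rw [e1]
        rw [show (C₂ * ε ^ (-(a:ℝ))) * h = C₂ * ε ^ (m:ℝ) by rw [mul_assoc, e2]]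
        rw [show 2 * (C₀ * (ε ^ (m:ℝ) * h)) / h = 2 * C₀ * ε ^ (m:ℝ) from by
          field_simp]
        ring
      calc (1 + ‖x‖) ^ q * ‖iteratedFDeriv ℝ (l + 1) (⇑(f ε)) x‖
          ≤ 2 ^ q * (2 * (C₀ * ε ^ ((2 * m + a : ℕ) : ℝ)) / h
            + (C₂ * ε ^ (-(a:ℝ))) * h) := hstep
        _ = 2 ^ q * (2 * C₀ + C₂) * ε ^ (m : ℝ) := key
        _ ≤ (2 ^ q * (2 * C₀ + C₂) + C₀) * ε ^ (m : ℝ) := by nlinarith
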